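/- Fix ρ ∈ [0,1), a depth M ≥ 1, layer widths d_0, d_1, …, d_M, for each layer l (1 ≤ l ≤ M) and each unit k (1 ≤ k ≤ d_l) a bias vector b^{(l,k)} ∈ ℝ^{d_{l−1}}, and an output bias b^out ∈ ℝ^{d_M}. Define recursively x^{(0)}(s) = s ∈ ℝ^{d_0} and x^{(l)}(s)_k = ∑_{i=1}^{d_{l−1}} (1−ρ)ρ^{i−1}·sort(|x^{(l−1)}(s) + b^{(l,k)}|)_i, and set g(s) = −(x^{(M)}(s) + b^out). Then the score function g : ℝ^{d_0} → ℝ^{d_M} is l∞ 1-Lipschitz: ‖g(s_1) − g(s_2)‖∞ ≤ ‖s_1 − s_2‖∞ for all s_1, s_2 ∈ ℝ^{d_0}. -/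

import Mathlib

/-- `sortDesc x i` is the `(i+1)`-th largest entry of `x` (entries arranged in
nonincreasing order). -/
noncomputable def sortDesc {d : ℕ} (x : Fin d → ℝ) : Fin d → ℝ :=
  fun i => x (Tuple.sort x i.rev)

lemma sortDesc_antitone {d : ℕ} (x : Fin d → ℝ) : Antitone (sortDesc x) := by
  have h := Tuple.monotone_sort x
  intro i j hij
  exact h (Fin.rev_le_rev.mpr hij)

lemma sortDesc_card_iff {d : ℕ} (x : Fin d → ℝ) (a : ℝ) (i : Fin d) :
    (i : ℕ) < Fintype.card {j // a ≤ x j} ↔ a ≤ sortDesc x i := by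
  have h := Tuple.lt_card_ge_iff_apply_ge_of_antitone (f := sortDesc x) (a := a) (j := i) (sortDesc_antitone x)
  rw [← h, ← Fintype.card_subtype]
  have e : {j // a ≤ sortDesc x j} ≃ {j // a ≤ x j} := by
    refine Equiv.subtypeEquiv (Fin.revPerm.trans (Tuple.sort x)) ?_
    intro j; simp [sortDesc]
  rw [Fintype.card_congr e]

lemma sortDesc_le_add {d : ℕ} (u v : Fin d → ℝ) (c : ℝ)
    (h : ∀ j, u j ≤ v j + c) (i : Fin d) :
    sortDesc u i ≤ sortDesc v i + c := by
  have h1 : (i : ℕ) < Fintype.card {j // sortDesc u i ≤ u j} :=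
    (sortDesc_card_iff u (sortDesc u i) i).mpr le_rfl
  have h2 : Fintype.card {j // sortDesc u i ≤ u j}
      ≤ Fintype.card {j // sortDesc u i - c ≤ v j} := by
    apply Fintype.card_subtype_mono
    intro j hj
    have := h j
    linarith
  have := (sortDesc_card_iff v (sortDesc u i - c) i).mp (lt_of_lt_of_le h1 h2)
  linarith

lemma abs_sortDesc_sub_le {d : ℕ} (u v : Fin d → ℝ) (c : ℝ)
    (h : ∀ j, |u j - v j| ≤ c) (i : Fin d) :
    |sortDesc u i - sortDesc v i| ≤ c := by
  rw [abs_sub_le_iff]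
  constructor
  · have := sortDesc_le_add u v c (fun j => by have := abs_le.mp (h j); linarith) i
    linarith
  · have := sortDesc_le_add v u c (fun j => by have := abs_le.mp (h j); linarith) i
    linarith

lemma layer_step {d1 d2 : ℕ} (ρ c : ℝ) (hρ0 : 0 ≤ ρ) (hρ1 : ρ < 1) (hc : 0 ≤ c)
    (u v : Fin d1 → ℝ) (h : ∀ j, |u j - v j| ≤ c) :
    |∑ i : Fin d1, (1 - ρ) * ρ ^ (i : ℕ) * sortDesc u i
      - ∑ i : Fin d1, (1 - ρ) * ρ ^ (i : ℕ) * sortDesc v i| ≤ c := by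
  rw [← Finset.sum_sub_distrib]
  calc |∑ i : Fin d1, ((1 - ρ) * ρ ^ (i : ℕ) * sortDesc u i
          - (1 - ρ) * ρ ^ (i : ℕ) * sortDesc v i)|
      ≤ ∑ i : Fin d1, |(1 - ρ) * ρ ^ (i : ℕ) * sortDesc u i
          - (1 - ρ) * ρ ^ (i : ℕ) * sortDesc v i| := Finset.abs_sum_le_sum_abs _ _
    _ ≤ ∑ i : Fin d1, (1 - ρ) * ρ ^ (i : ℕ) * c := by
        apply Finset.sum_le_sum
        intro i _
        rw [← mul_sub, abs_mul]
        have hw : 0 ≤ (1 - ρ) * ρ ^ (i : ℕ) :=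
          mul_nonneg (by linarith) (pow_nonneg hρ0 _)
        rw [abs_of_nonneg hw]
        exact mul_le_mul_of_nonneg_left (abs_sortDesc_sub_le u v c h i) hw
    _ = (1 - ρ^d1) * c := by
        rw [← Finset.sum_mul]
        congr 1
        rw [← Finset.mul_sum, Fin.sum_univ_eq_sum_range (fun i => ρ ^ i)]
        linear_combination (-1 : ℝ) * geom_sum_mul ρ d1
    _ ≤ c := by
        nlinarith [pow_nonneg hρ0 d1]

/-- An `M`-layer SortNet score function, built from layers
`x^{(l+1)}(s)_k = ∑_i (1−ρ)ρ^i · sort(|x^{(l)}(s) + b^{(l,k)}|)_i` on top of the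
input `x^{(0)}(s) = s`, with output `g(s) = −(x^{(M)}(s) + b^out)`, is `l∞`
1-Lipschitz: `‖g s₁ − g s₂‖∞ ≤ ‖s₁ − s₂‖∞`. Here `b l k` is the bias vector of
unit `k` of layer `l+1` (so layers `1 ≤ l+1 ≤ M`), and the norm on `Fin k → ℝ`
is the sup norm. -/
theorem sortNet_score_function_linf_one_lipschitz
    (ρ : ℝ) (hρ0 : 0 ≤ ρ) (hρ1 : ρ < 1)
    (M : ℕ) (hM : 1 ≤ M)
    (d : ℕ → ℕ) (hd : ∀ l, 0 < d l)
    (b : (l : ℕ) → Fin (d (l + 1)) → Fin (d l) → ℝ)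
    (bout : Fin (d M) → ℝ)
    (x : (l : ℕ) → (Fin (d 0) → ℝ) → Fin (d l) → ℝ)
    (hx0 : ∀ s, x 0 s = s)
    (hxl : ∀ (l : ℕ) (s : Fin (d 0) → ℝ) (k : Fin (d (l + 1))),
      x (l + 1) s k = ∑ i : Fin (d l),
        (1 - ρ) * ρ ^ (i : ℕ) * sortDesc (fun j => |x l s j + b l k j|) i)
    (g : (Fin (d 0) → ℝ) → Fin (d M) → ℝ)
    (hg : ∀ s, g s = -(x M s + bout)) :
    ∀ s₁ s₂ : Fin (d 0) → ℝ, ‖g s₁ - g s₂‖ ≤ ‖s₁ - s₂‖ := by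
  intro s₁ s₂
  set c := ‖s₁ - s₂‖ with hc
  have hc0 : 0 ≤ c := norm_nonneg _
  have key : ∀ l, ∀ k : Fin (d l), |x l s₁ k - x l s₂ k| ≤ c := by
    intro l
    induction l with
    | zero =>
      intro k
      rw [hx0, hx0]
      have := norm_le_pi_norm (s₁ - s₂) k
      simpa [Real.norm_eq_abs] using this
    | succ l ih =>
      intro k
      rw [hxl, hxl]
      apply layer_step (d2 := d (l + 1)) ρ c hρ0 hρ1 hc0
      intro j
      have h1 := abs_abs_sub_abs_le_abs_sub (x l s₁ j + b l k j) (x l s₂ j + b l k j)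
      have h2 : x l s₁ j + b l k j - (x l s₂ j + b l k j) = x l s₁ j - x l s₂ j := by
        ring
      rw [h2] at h1
      exact h1.trans (ih j)
  rw [pi_norm_le_iff_of_nonneg hc0]
  intro i
  rw [hg, hg]
  have : (-(x M s₁ + bout) - -(x M s₂ + bout)) i = -(x M s₁ i - x M s₂ i) := by
    simp; ring
  rw [this, Real.norm_eq_abs, abs_neg]
  exact key M i
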